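/- Let R be a finite subset of (Fin n → ZMod 2), let w be a weight function with w(y) ∈ (0,1] for all y ∈ R, and write w(A) = Σ_{y∈A} w(y). Let κ ∈ (0,1), let pivot = ⌈e^{3/2}·(1 + 1/κ)²⌉, let m ≥ 0 be an integer such that w(R) − 1 = 2^{m} · pivot, and fix y ∈ R and α ∈ (Fin m → ZMod 2). If h is chosen uniformly at random from H_xor(n, m), then Pr[ pivot/(1+κ) ≤ w(R ∩ h^{-1}(α)) ≤ 1 + (1+κ)·pivot and h(y) = α ] ≥ (1 − e^{-3/2}) · 2^{-m}. -/

import Mathlib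

open scoped Classical

/-- The XOR hash family `H_xor(n, m)`: for coefficients
`a i = (a_{i,0}, (a_{i,1}, …, a_{i,n}))`, the hash of `y` has `i`-th component
`a_{i,0} + Σ_l a_{i,l}·y_l` over `ZMod 2`. -/
def hashXor (n m : ℕ) (a : Fin m → ZMod 2 × (Fin n → ZMod 2))
    (y : Fin n → ZMod 2) : Fin m → ZMod 2 :=
  fun j => (a j).1 + ∑ l, (a j).2 l * y l

namespace XorHash
open Finset

variable {n m : ℕ}

def dotp {n : ℕ} (c d : Fin n → ZMod 2) : ZMod 2 := ∑ l, c l * d l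

lemma dotp_add_left (c c' d : Fin n → ZMod 2) : dotp (c + c') d = dotp c d + dotp c' d := by
  simp [dotp, add_mul, Finset.sum_add_distrib]

lemma dotp_sub_right (c d d' : Fin n → ZMod 2) : dotp c (d - d') = dotp c d - dotp c d' := by
  simp [dotp, mul_sub, Finset.sum_sub_distrib]

lemma dotp_single (l : Fin n) (s : ZMod 2) (d : Fin n → ZMod 2) :
    dotp (Pi.single l s) d = s * d l := by
  classical
  rw [dotp, Finset.sum_eq_single l]
  · simp
  · intro b _ hb; simp [Pi.single_eq_of_ne hb]
  · intro h; exact absurd (mem_univ l) h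

lemma fiber_card_mul {G H : Type*} [AddCommGroup G] [AddCommGroup H]
    [Fintype G] [Fintype H] [DecidableEq H]
    (f : G →+ H) (hf : Function.Surjective f) (t : H) :
    (univ.filter (fun g => f g = t)).card * Fintype.card H = Fintype.card G := by
  classical
  have key : ∀ s : H, (univ.filter (fun g => f g = s)).card
      = (univ.filter (fun g => f g = 0)).card := by
    intro s
    obtain ⟨g0, hg0⟩ := hf s
    apply Finset.card_bij' (fun g _ => g - g0) (fun g _ => g + g0)
    · intro g hg; simp only [mem_filter, mem_univ, true_and] at *
      simp [map_sub, hg, hg0]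
    · intro g hg; simp only [mem_filter, mem_univ, true_and] at *
      simp [map_add, hg, hg0]
    · intros; simp
    · intros; simp
  have hsum := Finset.card_eq_sum_card_fiberwise
    (fun g (_ : g ∈ (univ : Finset G)) => Finset.mem_univ (f g))
  rw [Finset.card_univ] at hsum
  rw [key t, hsum, Finset.sum_congr rfl (fun s _ => key s), Finset.sum_const,
    Finset.card_univ, smul_eq_mul, mul_comm]

def dotHom (d : Fin n → ZMod 2) : (Fin n → ZMod 2) →+ ZMod 2 :=
  AddMonoidHom.mk' (fun c => dotp c d)
    (by intro a b; simp [dotp, add_mul, Finset.sum_add_distrib])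

@[simp] lemma dotHom_apply (d c : Fin n → ZMod 2) : dotHom d c = dotp c d := rfl

lemma zmod2_cases (x : ZMod 2) : x = 0 ∨ x = 1 := by revert x; decide

-- dummy for compile check
lemma card_pi : Fintype.card (Fin n → ZMod 2) = 2 ^ n := by simp

lemma countd {d : Fin n → ZMod 2} (hd : d ≠ 0) (s : ZMod 2) :
    (univ.filter (fun c : Fin n → ZMod 2 => dotp c d = s)).card * 2 = 2 ^ n := by
  have hsurj : Function.Surjective (dotHom d) := by
    intro t
    obtain ⟨l, hl⟩ := Function.ne_iff.mp hd
    have hl1 : d l = 1 := (zmod2_cases (d l)).resolve_left hl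
    exact ⟨Pi.single l t, by simp [dotp_single, hl1]⟩
  have := fiber_card_mul (dotHom d) hsurj s
  simp at this
  convert this using 3
  ext c; simp only [mem_filter]
  exact ⟨fun h => Finset.mem_filter.mpr h, fun h => Finset.mem_filter.mp h⟩

lemma exists_dotp_pair {d1 d2 : Fin n → ZMod 2} (hd1 : d1 ≠ 0) (hne : d1 ≠ d2) :
    ∃ u, dotp u d1 = 1 ∧ dotp u d2 = 0 := by
  obtain ⟨l0, hl0⟩ := Function.ne_iff.mp hne
  obtain ⟨l1, hl1⟩ := Function.ne_iff.mp hd1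
  have hl1' : d1 l1 = 1 := (zmod2_cases (d1 l1)).resolve_left (by simpa using hl1)
  rcases zmod2_cases (d1 l0) with h10 | h11
  · -- d1 l0 = 0, so d2 l0 ≠ 0 hence = 1
    have h2 : d2 l0 = 1 := by
      rcases zmod2_cases (d2 l0) with h | h
      · exact absurd (h10.trans h.symm) hl0
      · exact h
    rcases zmod2_cases (d2 l1) with h | h
    · exact ⟨Pi.single l1 1, by simp [dotp_single, hl1', h]⟩
    · refine ⟨Pi.single l0 1 + Pi.single l1 1, ?_, ?_⟩
      · have : dotp (Pi.single l0 1 + Pi.single l1 1) d1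
            = dotp (Pi.single l0 (1:ZMod 2)) d1 + dotp (Pi.single l1 1) d1 := by
          simp [dotp, add_mul, Finset.sum_add_distrib]
        rw [this, dotp_single, dotp_single, hl1', h10]; decide
      · have : dotp (Pi.single l0 1 + Pi.single l1 1) d2
            = dotp (Pi.single l0 (1:ZMod 2)) d2 + dotp (Pi.single l1 1) d2 := by
          simp [dotp, add_mul, Finset.sum_add_distrib]
        rw [this, dotp_single, dotp_single, h2, h]; decide
  · -- d1 l0 = 1
    rcases zmod2_cases (d2 l0) with h | h
    · exact ⟨Pi.single l0 1, by simp [dotp_single, h11, h]⟩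
    · -- d2 l0 = 1 contradicts hl0 with h11
      exact absurd (h11.trans h.symm) hl0

lemma countdd {d1 d2 : Fin n → ZMod 2} (hd1 : d1 ≠ 0) (hd2 : d2 ≠ 0) (hne : d1 ≠ d2)
    (s1 s2 : ZMod 2) :
    (univ.filter (fun c : Fin n → ZMod 2 => dotp c d1 = s1 ∧ dotp c d2 = s2)).card * 4
      = 2 ^ n := by
  set f : (Fin n → ZMod 2) →+ ZMod 2 × ZMod 2 :=
    AddMonoidHom.mk' (fun c => (dotp c d1, dotp c d2))
      (by intro a b; simp [dotp, add_mul, Finset.sum_add_distrib, Prod.ext_iff]) with hf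
  obtain ⟨u, hu1, hu2⟩ := exists_dotp_pair hd1 hne
  obtain ⟨v, hv2, hv1⟩ := exists_dotp_pair hd2 (Ne.symm hne)
  have hsurj : Function.Surjective f := by
    rintro ⟨s1, s2⟩
    rcases zmod2_cases s1 with h1 | h1 <;> rcases zmod2_cases s2 with h2 | h2 <;>
      subst h1 <;> subst h2
    · exact ⟨0, by simp [hf, dotp]⟩
    · exact ⟨v, by rw [hf]; exact Prod.ext hv1 hv2⟩
    · exact ⟨u, by rw [hf]; exact Prod.ext hu1 hu2⟩
    · refine ⟨u + v, ?_⟩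
      simp [hf, Prod.ext_iff, dotp, add_mul, Finset.sum_add_distrib]
      constructor
      · show dotp u d1 + dotp v d1 = 1; rw [hu1, hv1]; decide
      · show dotp u d2 + dotp v d2 = 1; rw [hu2, hv2]; decide
  have := fiber_card_mul f hsurj (s1, s2)
  simp only [card_pi] at this
  have hcard : Fintype.card (ZMod 2 × ZMod 2) = 4 := by decide
  rw [hcard] at this
  convert this using 3
  ext x; simp only [mem_filter, mem_univ, true_and, hf, Prod.ext_iff]; rfl

lemma cnt1 (y : Fin n → ZMod 2) (t : ZMod 2) :
    (univ.filter (fun b : ZMod 2 × (Fin n → ZMod 2) => b.1 + dotp b.2 y = t)).card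
      = 2 ^ n := by
  rw [show (2:ℕ)^n = (univ : Finset (Fin n → ZMod 2)).card by simp]
  apply Finset.card_bij' (fun b _ => b.2) (fun c _ => (t - dotp c y, c))
  · intros; exact mem_univ _
  · intro c _; simp only [mem_filter, mem_univ, true_and]; ring
  · intro b hb; simp only [mem_filter, mem_univ, true_and] at hb
    exact Prod.ext (by rw [← hb]; ring) rfl
  · intros; rfl

lemma cnt2 {y z : Fin n → ZMod 2} (hzy : z ≠ y) (t : ZMod 2) :
    (univ.filter (fun b : ZMod 2 × (Fin n → ZMod 2) =>
        b.1 + dotp b.2 z = t ∧ b.1 + dotp b.2 y = t)).card * 2 = 2 ^ n := by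
  have hd : z - y ≠ 0 := sub_ne_zero.mpr hzy
  rw [← countd hd 0]
  congr 1
  apply Finset.card_bij' (fun b _ => b.2) (fun c _ => (t - dotp c y, c))
  · intro b hb
    simp only [mem_filter, mem_univ, true_and] at hb ⊢
    have : dotp b.2 (z - y) = dotp b.2 z - dotp b.2 y := by
      simp [dotp, mul_sub, Finset.sum_sub_distrib]
    rw [this]
    have h1 : dotp b.2 z = t - b.1 := by rw [← hb.1]; ring
    have h2 : dotp b.2 y = t - b.1 := by rw [← hb.2]; ring
    rw [h1, h2]; ring
  · intro c hc
    simp only [mem_filter, mem_univ, true_and] at hc ⊢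
    have : dotp c z = dotp c y := by
      have : dotp c (z - y) = dotp c z - dotp c y := by
        simp [dotp, mul_sub, Finset.sum_sub_distrib]
      rw [this] at hc
      linear_combination (norm := ring_nf) hc  -- maybe fails
    constructor
    · rw [this]; ring
    · ring
  · intro b hb; simp only [mem_filter, mem_univ, true_and] at hb
    exact Prod.ext (by rw [← hb.2]; ring) rfl
  · intros; rfl

lemma cnt3 {y z1 z2 : Fin n → ZMod 2} (h1 : z1 ≠ y) (h2 : z2 ≠ y) (h12 : z1 ≠ z2)
    (t : ZMod 2) :
    (univ.filter (fun b : ZMod 2 × (Fin n → ZMod 2) =>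
        (b.1 + dotp b.2 z1 = t ∧ b.1 + dotp b.2 z2 = t) ∧ b.1 + dotp b.2 y = t)).card * 4
      = 2 ^ n := by
  have hd1 : z1 - y ≠ 0 := sub_ne_zero.mpr h1
  have hd2 : z2 - y ≠ 0 := sub_ne_zero.mpr h2
  have hdd : z1 - y ≠ z2 - y := fun h => h12 (by linear_combination (norm := abel) h)
  rw [← countdd hd1 hd2 hdd 0 0]
  congr 1
  have dsub : ∀ (c a b : Fin n → ZMod 2), dotp c (a - b) = dotp c a - dotp c b := by
    intro c a b; simp [dotp, mul_sub, Finset.sum_sub_distrib]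
  apply Finset.card_bij' (fun b _ => b.2) (fun c _ => (t - dotp c y, c))
  · intro b hb
    simp only [mem_filter, mem_univ, true_and] at hb ⊢
    obtain ⟨⟨e1, e2⟩, e3⟩ := hb
    constructor
    · rw [dsub]
      have q1 : dotp b.2 z1 = t - b.1 := by rw [← e1]; ring
      have q3 : dotp b.2 y = t - b.1 := by rw [← e3]; ring
      rw [q1, q3]; ring
    · rw [dsub]
      have q2 : dotp b.2 z2 = t - b.1 := by rw [← e2]; ring
      have q3 : dotp b.2 y = t - b.1 := by rw [← e3]; ring
      rw [q2, q3]; ring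
  · intro c hc
    simp only [mem_filter, mem_univ, true_and] at hc ⊢
    rw [dsub, dsub] at hc
    have q1 : dotp c z1 = dotp c y := by linear_combination hc.1
    have q2 : dotp c z2 = dotp c y := by linear_combination hc.2
    refine ⟨⟨?_, ?_⟩, ?_⟩
    · rw [q1]; ring
    · rw [q2]; ring
    · ring
  · intro b hb; simp only [mem_filter, mem_univ, true_and] at hb
    exact Prod.ext (by rw [← hb.2]; ring) rfl
  · intros; rfl

lemma filter_pi_card {m : ℕ} {β : Type*} [Fintype β] [DecidableEq β]
    (Q : Fin m → β → Prop) [∀ j b, Decidable (Q j b)] :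
    (univ.filter (fun a : Fin m → β => ∀ j, Q j (a j))).card
      = ∏ j, (univ.filter (fun b => Q j b)).card := by
  rw [← Fintype.card_piFinset]
  congr 1
  ext a
  simp [Fintype.mem_piFinset]

lemma C1 (y : Fin n → ZMod 2) (α : Fin m → ZMod 2) :
    (univ.filter (fun a : Fin m → ZMod 2 × (Fin n → ZMod 2) =>
        hashXor n m a y = α)).card = (2 ^ n) ^ m := by
  have h : (univ.filter (fun a : Fin m → ZMod 2 × (Fin n → ZMod 2) =>
      hashXor n m a y = α))
      = univ.filter (fun a => ∀ j, (a j).1 + dotp (a j).2 y = α j) := by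
    ext a; simp only [mem_filter, mem_univ, true_and]; simp [hashXor, funext_iff, dotp]
  rw [h, filter_pi_card (fun j (b : ZMod 2 × (Fin n → ZMod 2)) => b.1 + dotp b.2 y = α j)]
  simp [cnt1 y]

lemma C2 {y z : Fin n → ZMod 2} (hzy : z ≠ y) (α : Fin m → ZMod 2) :
    (univ.filter (fun a : Fin m → ZMod 2 × (Fin n → ZMod 2) =>
        hashXor n m a z = α ∧ hashXor n m a y = α)).card * 2 ^ m = (2 ^ n) ^ m := by
  have h : (univ.filter (fun a : Fin m → ZMod 2 × (Fin n → ZMod 2) =>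
      hashXor n m a z = α ∧ hashXor n m a y = α))
      = univ.filter (fun a => ∀ j,
          (a j).1 + dotp (a j).2 z = α j ∧ (a j).1 + dotp (a j).2 y = α j) := by
    ext a
    simp only [mem_filter, mem_univ, true_and]
    simp only [mem_filter, mem_univ, true_and, hashXor, funext_iff, dotp]
    constructor
    · rintro ⟨ha, hb⟩ j; exact ⟨ha j, hb j⟩
    · intro h; exact ⟨fun j => (h j).1, fun j => (h j).2⟩
  rw [h, filter_pi_card (fun j (b : ZMod 2 × (Fin n → ZMod 2)) =>
    b.1 + dotp b.2 z = α j ∧ b.1 + dotp b.2 y = α j)]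
  calc (∏ j, (univ.filter (fun b : ZMod 2 × (Fin n → ZMod 2) =>
          b.1 + dotp b.2 z = α j ∧ b.1 + dotp b.2 y = α j)).card) * 2 ^ m
      = ∏ j, ((univ.filter (fun b : ZMod 2 × (Fin n → ZMod 2) =>
          b.1 + dotp b.2 z = α j ∧ b.1 + dotp b.2 y = α j)).card * 2) := by
        rw [Finset.prod_mul_distrib, Finset.prod_const, Finset.card_univ, Fintype.card_fin]
    _ = ∏ _j : Fin m, 2 ^ n := Finset.prod_congr rfl (fun j _ => cnt2 hzy (α j))
    _ = (2 ^ n) ^ m := by simp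

lemma C3 {y z1 z2 : Fin n → ZMod 2} (h1 : z1 ≠ y) (h2 : z2 ≠ y) (h12 : z1 ≠ z2)
    (α : Fin m → ZMod 2) :
    (univ.filter (fun a : Fin m → ZMod 2 × (Fin n → ZMod 2) =>
        (hashXor n m a z1 = α ∧ hashXor n m a z2 = α) ∧ hashXor n m a y = α)).card * 4 ^ m
      = (2 ^ n) ^ m := by
  have h : (univ.filter (fun a : Fin m → ZMod 2 × (Fin n → ZMod 2) =>
      (hashXor n m a z1 = α ∧ hashXor n m a z2 = α) ∧ hashXor n m a y = α))
      = univ.filter (fun a => ∀ j,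
          ((a j).1 + dotp (a j).2 z1 = α j ∧ (a j).1 + dotp (a j).2 z2 = α j)
            ∧ (a j).1 + dotp (a j).2 y = α j) := by
    ext a
    simp only [mem_filter, mem_univ, true_and]
    simp only [mem_filter, mem_univ, true_and, hashXor, funext_iff, dotp]
    constructor
    · rintro ⟨⟨ha, hb⟩, hc⟩ j; exact ⟨⟨ha j, hb j⟩, hc j⟩
    · intro h; exact ⟨⟨fun j => (h j).1.1, fun j => (h j).1.2⟩, fun j => (h j).2⟩
  rw [h, filter_pi_card (fun j (b : ZMod 2 × (Fin n → ZMod 2)) =>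
    (b.1 + dotp b.2 z1 = α j ∧ b.1 + dotp b.2 z2 = α j) ∧ b.1 + dotp b.2 y = α j)]
  calc (∏ j, (univ.filter (fun b : ZMod 2 × (Fin n → ZMod 2) =>
          (b.1 + dotp b.2 z1 = α j ∧ b.1 + dotp b.2 z2 = α j) ∧ b.1 + dotp b.2 y = α j)).card)
        * 4 ^ m
      = ∏ j, ((univ.filter (fun b : ZMod 2 × (Fin n → ZMod 2) =>
          (b.1 + dotp b.2 z1 = α j ∧ b.1 + dotp b.2 z2 = α j) ∧ b.1 + dotp b.2 y = α j)).card
          * 4) := by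
        rw [Finset.prod_mul_distrib, Finset.prod_const, Finset.card_univ, Fintype.card_fin]
    _ = ∏ _j : Fin m, 2 ^ n := Finset.prod_congr rfl (fun j _ => cnt3 h1 h2 h12 (α j))
    _ = (2 ^ n) ^ m := by simp

end XorHash

open Finset
set_option maxHeartbeats 1000000 in
/-- Lower bound for the probability that the random XOR hash cell of `α` has weight in
`[pivot/(1+κ), 1+(1+κ)·pivot]` and contains the fixed witness `y`. -/
theorem hashXor_cell_witness_lower_bound
    (n m : ℕ) (hn : 1 ≤ n)
    (R : Finset (Fin n → ZMod 2)) (w : (Fin n → ZMod 2) → ℝ)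
    (hw : ∀ z ∈ R, w z ∈ Set.Ioc (0 : ℝ) 1)
    (κ : ℝ) (hκ0 : 0 < κ) (hκ1 : κ < 1)
    (pivot : ℝ) (hpivot : pivot = (⌈Real.exp (3 / 2) * (1 + 1 / κ) ^ 2⌉ : ℝ))
    (hm : (∑ z ∈ R, w z) - 1 = (2 : ℝ) ^ m * pivot)
    (y : Fin n → ZMod 2) (hy : y ∈ R) (α : Fin m → ZMod 2) :
    (1 - Real.exp (-(3 / 2))) * (2 : ℝ) ^ (-(m : ℤ)) ≤
      ((Finset.univ.filter
          (fun a : Fin m → ZMod 2 × (Fin n → ZMod 2) =>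
            (pivot / (1 + κ) ≤ ∑ z ∈ R.filter (fun z => hashXor n m a z = α), w z ∧
             (∑ z ∈ R.filter (fun z => hashXor n m a z = α), w z) ≤ 1 + (1 + κ) * pivot) ∧
            hashXor n m a y = α)).card : ℝ) /
        (Fintype.card (Fin m → ZMod 2 × (Fin n → ZMod 2)) : ℝ) := by
  classical
  obtain ⟨hwy0, hwy1⟩ := hw y hy
  set S : Finset (Fin m → ZMod 2 × (Fin n → ZMod 2)) :=
    univ.filter (fun a => hashXor n m a y = α) with hSdef
  have hScard : S.card = (2 ^ n) ^ m := XorHash.C1 y α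
  have hSpos : (0:ℝ) < S.card := by rw [hScard]; positivity
  set E : Finset (Fin n → ZMod 2) := R.erase y with hEdef
  set p : ℝ := ((2:ℝ) ^ m)⁻¹ with hpdef
  have h2m : (0:ℝ) < 2 ^ m := by positivity
  have hp0 : 0 < p := by positivity
  have hp2 : p * 2 ^ m = 1 := by rw [hpdef]; field_simp
  have hp1 : p ≤ 1 := by
    rw [hpdef]
    have h1 : (1:ℝ) ≤ 2 ^ m := by exact_mod_cast Nat.one_le_two_pow
    exact inv_le_one_of_one_le₀ h1
  set ind : (Fin n → ZMod 2) → (Fin m → ZMod 2 × (Fin n → ZMod 2)) → ℝ :=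
    fun z a => if hashXor n m a z = α then 1 else 0 with hind
  -- helper casts
  have conv1 : ∀ c : ℕ, c * 2 ^ m = (2 ^ n) ^ m → (c : ℝ) = S.card * p := by
    intro c hc
    have hc' : (c : ℝ) * 2 ^ m = ((2:ℝ) ^ n) ^ m := by exact_mod_cast hc
    have hS' : (S.card : ℝ) = ((2:ℝ) ^ n) ^ m := by exact_mod_cast hScard
    rw [hS', ← hc', hpdef]; field_simp
  have conv2 : ∀ c : ℕ, c * 4 ^ m = (2 ^ n) ^ m → (c : ℝ) = S.card * p ^ 2 := by
    intro c hc
    have hc' : (c : ℝ) * 4 ^ m = ((2:ℝ) ^ n) ^ m := by exact_mod_cast hc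
    have hS' : (S.card : ℝ) = ((2:ℝ) ^ n) ^ m := by exact_mod_cast hScard
    have h4 : ((4:ℝ)) ^ m = (2 ^ m) ^ 2 := by
      rw [show (4:ℝ) = 2 ^ 2 by norm_num, ← pow_mul, ← pow_mul, Nat.mul_comm]
    rw [hS', ← hc', h4, hpdef]
    field_simp
  -- first moments
  have E1 : ∀ z ∈ E, ∑ a ∈ S, ind z a = S.card * p := by
    intro z hz
    have hzy : z ≠ y := Finset.ne_of_mem_erase hz
    have hfilter : S.filter (fun a => hashXor n m a z = α)
        = univ.filter (fun a => hashXor n m a z = α ∧ hashXor n m a y = α) := by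
      rw [hSdef, Finset.filter_filter]
      apply Finset.filter_congr; intro a _; tauto
    have hsum : ∑ a ∈ S, ind z a
        = ((S.filter (fun a => hashXor n m a z = α)).card : ℝ) := by
      rw [hind]; simp [Finset.sum_boole]
    rw [hsum, hfilter]
    exact conv1 _ (XorHash.C2 hzy α)
  have E2 : ∀ z1 ∈ E, ∀ z2 ∈ E, z1 ≠ z2 →
      ∑ a ∈ S, ind z1 a * ind z2 a = S.card * p ^ 2 := by
    intro z1 h1 z2 h2 h12
    have hfilter : S.filter (fun a => hashXor n m a z1 = α ∧ hashXor n m a z2 = α)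
        = univ.filter (fun a =>
            (hashXor n m a z1 = α ∧ hashXor n m a z2 = α) ∧ hashXor n m a y = α) := by
      rw [hSdef, Finset.filter_filter]
      apply Finset.filter_congr; intro a _; tauto
    have hsum : ∑ a ∈ S, ind z1 a * ind z2 a
        = ((S.filter (fun a => hashXor n m a z1 = α ∧ hashXor n m a z2 = α)).card : ℝ) := by
      rw [hind]
      rw [← Finset.sum_boole]
      apply Finset.sum_congr rfl
      intro a _
      by_cases hA : hashXor n m a z1 = α <;> by_cases hB : hashXor n m a z2 = α <;>
        simp [hA, hB]
    rw [hsum, hfilter]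
    exact conv2 _ (XorHash.C3 (Finset.ne_of_mem_erase h1) (Finset.ne_of_mem_erase h2) h12 α)
  -- aggregate quantities
  set T : ℝ := ∑ z ∈ E, w z with hTdef
  set Qs : ℝ := ∑ z ∈ E, (w z) ^ 2 with hQdef
  set F : (Fin m → ZMod 2 × (Fin n → ZMod 2)) → ℝ :=
    fun a => ∑ z ∈ E, w z * ind z a with hFdef
  -- variance
  have Var : ∑ a ∈ S, (F a - p * T) ^ 2 = S.card * (p * (1 - p) * Qs) := by
    have hFsub : ∀ a, F a - p * T = ∑ z ∈ E, w z * (ind z a - p) := by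
      intro a
      rw [hFdef, hTdef, Finset.mul_sum, ← Finset.sum_sub_distrib]
      exact Finset.sum_congr rfl (fun z _ => by ring)
    have inner : ∀ z1 ∈ E, ∀ z2 ∈ E,
        ∑ a ∈ S, (w z1 * (ind z1 a - p)) * (w z2 * (ind z2 a - p))
          = if z1 = z2 then (w z1) ^ 2 * (S.card * (p * (1 - p))) else 0 := by
      intro z1 h1 z2 h2
      have expand : ∀ a, (w z1 * (ind z1 a - p)) * (w z2 * (ind z2 a - p))
          = w z1 * w z2 *
            (ind z1 a * ind z2 a - p * ind z1 a - p * ind z2 a + p * p) := by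
        intro a; ring
      rw [Finset.sum_congr rfl (fun a _ => expand a), ← Finset.mul_sum]
      have hsplit : ∑ a ∈ S,
          (ind z1 a * ind z2 a - p * ind z1 a - p * ind z2 a + p * p)
          = (∑ a ∈ S, ind z1 a * ind z2 a) - p * (∑ a ∈ S, ind z1 a)
            - p * (∑ a ∈ S, ind z2 a) + S.card * (p * p) := by
        rw [Finset.sum_add_distrib, Finset.sum_sub_distrib, Finset.sum_sub_distrib,
          ← Finset.mul_sum, ← Finset.mul_sum, Finset.sum_const, nsmul_eq_mul]
      rw [hsplit, E1 z1 h1, E1 z2 h2]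
      by_cases h12 : z1 = z2
      · subst h12
        rw [if_pos rfl]
        have hsq : ∑ a ∈ S, ind z1 a * ind z1 a = ∑ a ∈ S, ind z1 a := by
          apply Finset.sum_congr rfl
          intro a _
          rw [hind]
          by_cases h : hashXor n m a z1 = α <;> simp [h]
        rw [hsq, E1 z1 h1]; ring
      · rw [if_neg h12, E2 z1 h1 z2 h2 h12]; ring
    calc ∑ a ∈ S, (F a - p * T) ^ 2
        = ∑ a ∈ S, ∑ z1 ∈ E, ∑ z2 ∈ E,
            (w z1 * (ind z1 a - p)) * (w z2 * (ind z2 a - p)) := by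
          apply Finset.sum_congr rfl
          intro a _
          rw [hFsub a, sq, Finset.sum_mul_sum]
      _ = ∑ z1 ∈ E, ∑ a ∈ S, ∑ z2 ∈ E,
            (w z1 * (ind z1 a - p)) * (w z2 * (ind z2 a - p)) := Finset.sum_comm
      _ = ∑ z1 ∈ E, ∑ z2 ∈ E, ∑ a ∈ S,
            (w z1 * (ind z1 a - p)) * (w z2 * (ind z2 a - p)) := by
          exact Finset.sum_congr rfl (fun z1 _ => Finset.sum_comm)
      _ = ∑ z1 ∈ E, (if z1 ∈ E then (w z1) ^ 2 * (S.card * (p * (1 - p))) else 0) := by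
          apply Finset.sum_congr rfl
          intro z1 hz1
          rw [Finset.sum_congr rfl (fun z2 hz2 => inner z1 hz1 z2 hz2)]
          exact Finset.sum_ite_eq E z1 _
      _ = ∑ z1 ∈ E, (w z1) ^ 2 * (S.card * (p * (1 - p))) :=
          Finset.sum_congr rfl (fun z1 hz1 => if_pos hz1)
      _ = S.card * (p * (1 - p) * Qs) := by
          rw [← Finset.sum_mul, ← hQdef]; ring
  -- basic facts about T, Qs, pivot
  have hT : T = 1 + 2 ^ m * pivot - w y := by
    have hsplit : w y + ∑ z ∈ E, w z = ∑ z ∈ R, w z := by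
      rw [hEdef]; exact Finset.add_sum_erase R w hy
    rw [hTdef]; linarith [hsplit, hm]
  have hpT : p * T = pivot + p * (1 - w y) := by
    rw [hT]; linear_combination pivot * hp2
  have hx0 : (0:ℝ) < Real.exp (3 / 2) * (1 + 1 / κ) ^ 2 := by positivity
  have hpiv_ge : Real.exp (3 / 2) * (1 + 1 / κ) ^ 2 ≤ pivot := by
    rw [hpivot]; exact Int.le_ceil _
  have hpiv1 : 1 ≤ pivot := by
    rw [hpivot]
    have : (1:ℤ) ≤ ⌈Real.exp (3 / 2) * (1 + 1 / κ) ^ 2⌉ := Int.ceil_pos.mpr hx0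
    exact_mod_cast this
  have hEsub : ∀ z ∈ E, z ∈ R := fun z hz => Finset.mem_of_mem_erase hz
  have hQT : Qs ≤ T := by
    rw [hQdef, hTdef]
    apply Finset.sum_le_sum
    intro z hz
    obtain ⟨h0, h1⟩ := hw z (hEsub z hz)
    have hzz : w z * w z ≤ w z * 1 := mul_le_mul_of_nonneg_left h1 h0.le
    rw [sq]; linarith
  have hQ0 : 0 ≤ Qs := by
    rw [hQdef]; exact Finset.sum_nonneg (fun z _ => sq_nonneg _)
  have hT0 : 0 ≤ T := by
    rw [hTdef]; exact Finset.sum_nonneg (fun z hz => (hw z (hEsub z hz)).1.le)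
  have hκ1' : (0:ℝ) < 1 + κ := by linarith
  set t : ℝ := κ / (1 + κ) * pivot with htdef
  have ht0 : 0 < t := by
    rw [htdef]; exact mul_pos (div_pos hκ0 hκ1') (by linarith)
  have htκ : t * (1 + κ) = κ * pivot := by
    rw [htdef]; field_simp
  have hvar_le : p * (1 - p) * Qs ≤ pivot := by
    have s1 : p * Qs ≤ p * T := mul_le_mul_of_nonneg_left hQT hp0.le
    have s2 : (1 - p) * (p * Qs) ≤ (1 - p) * (p * T) :=
      mul_le_mul_of_nonneg_left s1 (by linarith)
    have h0 : p * (1 - p) * Qs = (1 - p) * (p * Qs) := by ring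
    have h3 : (1 - p) * (p * T) = pivot - p * pivot + (1 - p) * (p * (1 - w y)) := by
      rw [hpT]; ring
    have a1 : p * (1 - w y) ≤ p := by
      have := mul_le_mul_of_nonneg_left (by linarith : 1 - w y ≤ 1) hp0.le
      linarith [this, mul_one p]
    have a0 : 0 ≤ p * (1 - w y) := mul_nonneg hp0.le (by linarith)
    have a2 : (1 - p) * (p * (1 - w y)) ≤ 1 * (p * (1 - w y)) :=
      mul_le_mul_of_nonneg_right (by linarith) a0
    have h5 : p ≤ p * pivot := le_mul_of_one_le_right hp0.le hpiv1
    linarith [s2, h0, h3, a1, a2, h5, one_mul (p * (1 - w y))]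
  have e1 : Real.exp (3 / 2) * (1 + κ) ^ 2 ≤ pivot * κ ^ 2 := by
    have hfrac : (1 + 1 / κ) ^ 2 = (1 + κ) ^ 2 / κ ^ 2 := by
      field_simp; ring
    rw [hfrac, ← mul_div_assoc, div_le_iff₀ (by positivity : (0:ℝ) < κ ^ 2)] at hpiv_ge
    linarith [hpiv_ge]
  have e2 : Real.exp (3 / 2) * pivot ≤ t ^ 2 := by
    have hsq : t ^ 2 * (1 + κ) ^ 2 = κ ^ 2 * pivot ^ 2 := by
      rw [← mul_pow, htκ, mul_pow]
    have step : Real.exp (3 / 2) * (1 + κ) ^ 2 * pivot ≤ pivot * κ ^ 2 * pivot :=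
      mul_le_mul_of_nonneg_right e1 (by linarith)
    have hdiv : Real.exp (3 / 2) * pivot * (1 + κ) ^ 2 ≤ t ^ 2 * (1 + κ) ^ 2 := by
      rw [hsq]; linarith [step]
    have := le_of_mul_le_mul_right (by linarith [hdiv] :
      Real.exp (3 / 2) * pivot * (1 + κ) ^ 2 ≤ t ^ 2 * (1 + κ) ^ 2) (by positivity : (0:ℝ) < (1 + κ) ^ 2)
    linarith
  have e3 : pivot ≤ t ^ 2 * Real.exp (-(3 / 2)) := by
    rw [Real.exp_neg, ← div_eq_mul_inv, le_div_iff₀ (Real.exp_pos _)]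
    linarith [e2]
  -- Chebyshev
  set Good : Finset (Fin m → ZMod 2 × (Fin n → ZMod 2)) :=
    S.filter (fun a => |F a - p * T| ≤ t) with hGdef
  have hGsub : Good ⊆ S := Finset.filter_subset _ _
  have hcast : (((S \ Good).card : ℝ)) = (S.card : ℝ) - Good.card := by
    rw [Finset.card_sdiff_of_subset hGsub]
    exact_mod_cast Nat.cast_sub (Finset.card_le_card hGsub)
  have cheb : ((S.card : ℝ) - Good.card) * t ^ 2 ≤ S.card * (p * (1 - p) * Qs) := by
    rw [← hcast]
    calc ((S \ Good).card : ℝ) * t ^ 2 = ∑ _a ∈ S \ Good, t ^ 2 := by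
          rw [Finset.sum_const, nsmul_eq_mul]
      _ ≤ ∑ a ∈ S \ Good, (F a - p * T) ^ 2 := by
          apply Finset.sum_le_sum
          intro a ha
          obtain ⟨haS, haG⟩ := Finset.mem_sdiff.mp ha
          have hna : ¬ |F a - p * T| ≤ t := fun hc => haG (Finset.mem_filter.mpr ⟨haS, hc⟩)
          push_neg at hna
          calc t ^ 2 ≤ |F a - p * T| ^ 2 := pow_le_pow_left₀ ht0.le hna.le 2
            _ = (F a - p * T) ^ 2 := sq_abs _
      _ ≤ ∑ a ∈ S, (F a - p * T) ^ 2 :=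
          Finset.sum_le_sum_of_subset_of_nonneg Finset.sdiff_subset (fun a _ _ => sq_nonneg _)
      _ = S.card * (p * (1 - p) * Qs) := Var
  have hGood_ge : (S.card : ℝ) * (1 - Real.exp (-(3 / 2))) ≤ Good.card := by
    have step1 : (p * (1 - p) * Qs) ≤ t ^ 2 * Real.exp (-(3 / 2)) := le_trans hvar_le e3
    have step2 : (S.card : ℝ) * (p * (1 - p) * Qs) ≤ S.card * (t ^ 2 * Real.exp (-(3 / 2))) :=
      mul_le_mul_of_nonneg_left step1 hSpos.le
    have key : ((S.card : ℝ) - Good.card) * t ^ 2 ≤ (S.card * Real.exp (-(3 / 2))) * t ^ 2 := by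
      calc ((S.card : ℝ) - Good.card) * t ^ 2 ≤ S.card * (p * (1 - p) * Qs) := cheb
        _ ≤ S.card * (t ^ 2 * Real.exp (-(3 / 2))) := step2
        _ = (S.card * Real.exp (-(3 / 2))) * t ^ 2 := by ring
    have := le_of_mul_le_mul_right key (by positivity : (0:ℝ) < t ^ 2)
    linarith
  -- Good events satisfy the target predicate
  have hsubset : Good ⊆ Finset.univ.filter
      (fun a : Fin m → ZMod 2 × (Fin n → ZMod 2) =>
        (pivot / (1 + κ) ≤ ∑ z ∈ R.filter (fun z => hashXor n m a z = α), w z ∧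
         (∑ z ∈ R.filter (fun z => hashXor n m a z = α), w z) ≤ 1 + (1 + κ) * pivot) ∧
        hashXor n m a y = α) := by
    intro a ha
    obtain ⟨haS, habs⟩ := Finset.mem_filter.mp ha
    have hhash : hashXor n m a y = α := (Finset.mem_filter.mp haS).2
    have hyP : y ∈ R.filter (fun z => hashXor n m a z = α) :=
      Finset.mem_filter.mpr ⟨hy, hhash⟩
    have hdecomp : ∑ z ∈ R.filter (fun z => hashXor n m a z = α), w z = w y + F a := by
      rw [← Finset.add_sum_erase _ _ hyP]
      congr 1
      rw [hFdef]
      have h1 : (R.filter (fun z => hashXor n m a z = α)).erase y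
          = E.filter (fun z => hashXor n m a z = α) := by
        rw [hEdef, Finset.filter_erase]
      rw [h1, Finset.sum_filter]
      apply Finset.sum_congr rfl
      intro z _
      rw [hind]
      by_cases h : hashXor n m a z = α <;> simp [h]
    obtain ⟨hlo, hhi⟩ := abs_le.mp habs
    have hF_lo : pivot + p * (1 - w y) - t ≤ F a := by linarith [hpT]
    have hF_hi : F a ≤ pivot + p * (1 - w y) + t := by linarith [hpT]
    refine Finset.mem_filter.mpr ⟨Finset.mem_univ _, ⟨⟨?_, ?_⟩, hhash⟩⟩
    · rw [hdecomp, div_le_iff₀ hκ1']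
      have hmul : (pivot + p * (1 - w y) - t) * (1 + κ) ≤ F a * (1 + κ) :=
        mul_le_mul_of_nonneg_right hF_lo hκ1'.le
      have q1 : 0 ≤ (p * (1 - w y)) * (1 + κ) :=
        mul_nonneg (mul_nonneg hp0.le (by linarith)) hκ1'.le
      have q2 : 0 ≤ w y * (1 + κ) := mul_nonneg hwy0.le hκ1'.le
      have hexp : (w y + F a) * (1 + κ) = w y * (1 + κ) + F a * (1 + κ) := by ring
      have hexp2 : (pivot + p * (1 - w y) - t) * (1 + κ)
          = pivot * (1 + κ) + (p * (1 - w y)) * (1 + κ) - t * (1 + κ) := by ring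
      linarith [hmul, q1, q2, htκ, hexp, hexp2]
    · rw [hdecomp]
      have q3 : 0 ≤ t * κ := mul_nonneg ht0.le hκ0.le
      have ht_le : t ≤ κ * pivot := by
        have hexp : t * (1 + κ) = t + t * κ := by ring
        linarith [htκ, q3, hexp]
      have q4 : 0 ≤ (1 - p) * (1 - w y) :=
        mul_nonneg (by linarith) (by linarith)
      have hexp3 : (1 - p) * (1 - w y) = 1 - p - w y + p * w y := by ring
      have hexp4 : p * (1 - w y) = p - p * w y := by ring
      linarith [hF_hi, ht_le, q4, hexp3, hexp4]
  -- conclusion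
  have hcardΩ : (Fintype.card (Fin m → ZMod 2 × (Fin n → ZMod 2)) : ℝ)
      = 2 ^ m * S.card := by
    have hΩ : Fintype.card (Fin m → ZMod 2 × (Fin n → ZMod 2)) = (2 * 2 ^ n) ^ m := by
      simp [Fintype.card_prod]
    rw [hΩ, hScard]
    push_cast
    rw [mul_pow]
  have hΩpos : (0:ℝ) < (Fintype.card (Fin m → ZMod 2 × (Fin n → ZMod 2)) : ℝ) := by
    rw [hcardΩ]; positivity
  have hTarget : (Good.card : ℝ) ≤
      ((Finset.univ.filter
          (fun a : Fin m → ZMod 2 × (Fin n → ZMod 2) =>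
            (pivot / (1 + κ) ≤ ∑ z ∈ R.filter (fun z => hashXor n m a z = α), w z ∧
             (∑ z ∈ R.filter (fun z => hashXor n m a z = α), w z) ≤ 1 + (1 + κ) * pivot) ∧
            hashXor n m a y = α)).card : ℝ) :=
    Nat.cast_le.mpr (Finset.card_le_card hsubset)
  have hzp : (2:ℝ) ^ (-(m : ℤ)) = p := by
    rw [zpow_neg, zpow_natCast, hpdef]
  rw [hzp, le_div_iff₀ hΩpos, hcardΩ]
  have lhs_eq : (1 - Real.exp (-(3 / 2))) * p * (2 ^ m * S.card)
      = (S.card : ℝ) * (1 - Real.exp (-(3 / 2))) * (p * 2 ^ m) := by ring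
  rw [lhs_eq, hp2, mul_one]
  calc (S.card : ℝ) * (1 - Real.exp (-(3 / 2))) ≤ Good.card := hGood_ge
    _ ≤ _ := hTarget
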